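/- arXiv:1911.05502 — 5 statements merged into one kernel-verified Lean document; each statement's English description precedes it below -/
import Mathlib

section
/- Let Y be a nonnegative integrable random variable and G a sub-σ-algebra. Then for all x > 0, x·P(E[Y|G] > x) ≤ E[2Y·1{2Y > x}]. -/
open MeasureTheory ProbabilityTheory
open scoped ProbabilityTheory

theorem stmt_0 {Ω : Type*} [MeasureSpace Ω] [IsProbabilityMeasure (ℙ : Measure Ω)]
    (Y : Ω → ℝ) (hYpos : ∀ ω, 0 ≤ Y ω) (hYint : Integrable Y)
    (G : MeasurableSpace Ω) (hG : G ≤ ‹MeasureSpace Ω›.toMeasurableSpace) :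
    ∀ x : ℝ, 0 < x →
      x * (ℙ {ω | x < (ℙ[Y|G]) ω}).toReal ≤
        ∫ ω, Set.indicator {ω | x < 2 * Y ω} (fun ω => 2 * Y ω) ω := by
  intro x hx
  letI m0 : MeasurableSpace Ω := MeasureSpace.toMeasurableSpace
  set A : Set Ω := {ω | x < (ℙ[Y|G]) ω} with hAdef
  have hAG : MeasurableSet[G] A := by
    exact measurableSet_lt measurable_const stronglyMeasurable_condExp.measurable
  have hA : MeasurableSet[MeasureSpace.toMeasurableSpace] A := hG _ hAG
  have hAfin : ℙ A ≠ ⊤ := measure_ne_top _ _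
  -- x * P(A) ≤ ∫_A E[Y|G]
  have h1 : x * (ℙ A).toReal ≤ ∫ ω in A, (ℙ[Y|G]) ω ∂ℙ := by
    refine setIntegral_ge_of_const_le_real hA hAfin (fun ω hω => le_of_lt hω) ?_
    exact integrable_condExp.integrableOn
  have h2 : ∫ ω in A, (ℙ[Y|G]) ω ∂ℙ = ∫ ω in A, Y ω ∂ℙ := setIntegral_condExp hG hYint hAG
  -- measurable modification of Y
  set Y' := hYint.1.mk Y with hY'def
  have hY'meas : StronglyMeasurable[MeasureSpace.toMeasurableSpace] Y' := hYint.1.stronglyMeasurable_mk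
  have hYY' : Y =ᵐ[ℙ] Y' := hYint.1.ae_eq_mk
  have hY'int : Integrable Y' := hYint.congr hYY'
  set B : Set Ω := {ω | x < 2 * Y' ω} with hBdef
  have hB : MeasurableSet[MeasureSpace.toMeasurableSpace] B :=
    measurableSet_lt measurable_const ((hY'meas.measurable).const_mul 2)
  set g : Ω → ℝ := B.indicator (fun ω => 2 * Y' ω) with hgdef
  have hgint : Integrable g := (hY'int.const_mul 2).indicator hB
  -- the target integrand equals g a.e.
  have hcongr : (fun ω => Set.indicator {ω | x < 2 * Y ω} (fun ω => 2 * Y ω) ω) =ᵐ[ℙ] g := by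
    filter_upwards [hYY'] with ω hω
    simp only [hgdef, hBdef, Set.indicator, Set.mem_setOf_eq, hω]
  have hEq : ∫ ω, Set.indicator {ω | x < 2 * Y ω} (fun ω => 2 * Y ω) ω = ∫ ω, g ω :=
    integral_congr_ae hcongr
  -- ∫_A (2Y - x) ≤ ∫ g
  have hf1int : Integrable (A.indicator (fun ω => 2 * Y ω - x)) :=
    ((hYint.const_mul 2).sub (integrable_const x)).indicator hA
  have hmono : ∫ ω, A.indicator (fun ω => 2 * Y ω - x) ω ≤ ∫ ω, g ω := by
    refine integral_mono_ae hf1int hgint ?_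
    filter_upwards [hYY'] with ω hω
    by_cases hωA : ω ∈ A
    · rw [Set.indicator_of_mem hωA]
      by_cases hωB : ω ∈ B
      · rw [hgdef, Set.indicator_of_mem hωB]
        rw [hω]
        linarith
      · rw [hgdef, Set.indicator_of_notMem hωB]
        simp only [hBdef, Set.mem_setOf_eq, not_lt] at hωB
        rw [hω]
        linarith
    · rw [Set.indicator_of_notMem hωA]
      rw [hgdef]
      by_cases hωB : ω ∈ B
      · rw [Set.indicator_of_mem hωB]
        have := hYpos ω
        rw [hω] at this
        linarith
      · rw [Set.indicator_of_notMem hωB]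
  -- ∫ indicator = ∫_A (2Y - x) = 2 ∫_A Y - x * P(A)
  have hsplit : ∫ ω, A.indicator (fun ω => 2 * Y ω - x) ω
      = 2 * ∫ ω in A, Y ω ∂ℙ - x * (ℙ A).toReal := by
    rw [integral_indicator hA]
    rw [integral_sub ((hYint.const_mul 2).integrableOn) (integrableOn_const hAfin)]
    rw [integral_const_mul, setIntegral_const, smul_eq_mul, Measure.real, mul_comm (ℙ A).toReal x]
  rw [hEq]
  rw [h2] at h1
  linarith [hsplit ▸ hmono]
end

section
/- Let Y be a nonnegative integrable random variable and G a sub-σ-algebra. Then for all x > 0, P(E[Y|G] > x) ≤ 4·∫_{1/4}^{∞} P(Y > x·v) dv. -/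
open MeasureTheory ProbabilityTheory
open scoped ProbabilityTheory ENNReal

/-- Scaling change of variables for lintegrals over `Ioi`. -/
lemma lint_scale_aux {c : ℝ} (hc : 0 < c) (f : ℝ → ℝ≥0∞) (hf : Measurable f) (a : ℝ) :
    ∫⁻ t in Set.Ioi (c * a), f t = ENNReal.ofReal c * ∫⁻ v in Set.Ioi a, f (c * v) := by
  have hpre : (fun v : ℝ => c * v) ⁻¹' Set.Ioi (c * a) = Set.Ioi a := by
    ext v
    simp [Set.mem_Ioi, mul_lt_mul_iff_right₀ hc]
  have hsmul := Real.smul_map_volume_mul_left (a := c) hc.ne'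
  calc ∫⁻ t in Set.Ioi (c * a), f t
      = ∫⁻ t in Set.Ioi (c * a), f t
          ∂(ENNReal.ofReal |c| • Measure.map (fun v : ℝ => c * v) volume) := by
        rw [hsmul]
    _ = ENNReal.ofReal |c| *
          ∫⁻ t in Set.Ioi (c * a), f t ∂(Measure.map (fun v : ℝ => c * v) volume) := by
        rw [Measure.restrict_smul, lintegral_smul_measure, smul_eq_mul]
    _ = ENNReal.ofReal c * ∫⁻ v in Set.Ioi a, f (c * v) := by
        rw [setLIntegral_map measurableSet_Ioi hf (measurable_const_mul c), hpre,
          abs_of_pos hc]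

/-- Markov-step helper: lower bound on a set integral from a pointwise bound. -/
lemma markov_set_aux {Ω : Type*} [MeasureSpace Ω] [IsProbabilityMeasure (ℙ : Measure Ω)]
    (f Y : Ω → ℝ) (hf : Integrable f) (A : Set Ω) (hA : MeasurableSet A)
    (x : ℝ) (hsub : ∀ ω ∈ A, x ≤ f ω) (heq : ∫ ω in A, f ω = ∫ ω in A, Y ω) :
    x * (ℙ A).toReal ≤ ∫ ω in A, Y ω := by
  have h1 : ∫ ω in A, x ∂ℙ ≤ ∫ ω in A, f ω :=
    setIntegral_mono_on (integrableOn_const (measure_ne_top _ _))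
      hf.integrableOn hA hsub
  have h3 : ∫ ω in A, x ∂ℙ = (ℙ A).toReal * x := by
    rw [setIntegral_const, smul_eq_mul]; rfl
  rw [h3, heq] at h1
  linarith [h1]

/-- Main estimate: if `x * P(A) ≤ ∫_A Y` then `P(A) ≤ 4 ∫_{1/4}^∞ P(Y > x v) dv`. -/
lemma tail_bound_aux {Ω : Type*} [MeasureSpace Ω] [IsProbabilityMeasure (ℙ : Measure Ω)]
    (Y : Ω → ℝ) (hYpos : ∀ ω, 0 ≤ Y ω) (hYint : Integrable Y)
    (A : Set Ω) (hA : MeasurableSet A) (x : ℝ) (hx : 0 < x)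
    (step1 : x * (ℙ A).toReal ≤ ∫ ω in A, Y ω) :
    (ℙ A).toReal ≤ 4 * ∫ v in Set.Ioi (1/4 : ℝ), (ℙ {ω | x * v < Y ω}).toReal := by
  set g : ℝ → ℝ≥0∞ := fun t => ℙ {ω | t < Y ω} with hgdef
  have hganti : Antitone g := fun s t hst =>
    measure_mono (fun ω hω => lt_of_le_of_lt hst hω)
  have hgmble : Measurable g := hganti.measurable
  set gA : ℝ → ℝ≥0∞ := fun t => Measure.restrict ℙ A {ω | t < Y ω} with hgAdef
  have hgAanti : Antitone gA := fun s t hst =>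
    measure_mono (fun ω hω => lt_of_le_of_lt hst hω)
  have hgAmble : Measurable gA := hgAanti.measurable
  have hgA_le_g : ∀ t, gA t ≤ g t := fun t => Measure.restrict_le_self _
  have hgA_le_PA : ∀ t, gA t ≤ ℙ A := by
    intro t
    calc gA t ≤ Measure.restrict ℙ A Set.univ := measure_mono (Set.subset_univ _)
      _ = ℙ A := by rw [Measure.restrict_apply_univ]
  -- layer cake for ∫_A Y
  have hYm : AEMeasurable Y (Measure.restrict ℙ A) := hYint.aemeasurable.restrict
  have step2 : ENNReal.ofReal (∫ ω in A, Y ω) = ∫⁻ t in Set.Ioi (0:ℝ), gA t := by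
    rw [ofReal_integral_eq_lintegral_ofReal hYint.restrict
      (Filter.Eventually.of_forall hYpos)]
    exact lintegral_eq_lintegral_meas_lt (Measure.restrict ℙ A)
      (Filter.Eventually.of_forall hYpos) hYm
  -- split at x/4
  have hsplit : Set.Ioi (0:ℝ) = Set.Ioc 0 (x/4) ∪ Set.Ioi (x/4) :=
    (Set.Ioc_union_Ioi_eq_Ioi (by linarith)).symm
  have hIoc : ∫⁻ t in Set.Ioc (0:ℝ) (x/4), gA t ≤ ENNReal.ofReal (x/4) * ℙ A := by
    calc ∫⁻ t in Set.Ioc (0:ℝ) (x/4), gA t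
        ≤ ∫⁻ _ in Set.Ioc (0:ℝ) (x/4), ℙ A :=
          lintegral_mono fun t => hgA_le_PA t
      _ = ℙ A * volume (Set.Ioc (0:ℝ) (x/4)) := by rw [setLIntegral_const]
      _ = ENNReal.ofReal (x/4) * ℙ A := by
          rw [Real.volume_Ioc, mul_comm]
          norm_num
  have hsum : ∫⁻ t in Set.Ioi (0:ℝ), gA t
      = (∫⁻ t in Set.Ioc (0:ℝ) (x/4), gA t) + ∫⁻ t in Set.Ioi (x/4), gA t := by
    rw [hsplit, lintegral_union measurableSet_Ioi Set.Ioc_disjoint_Ioi_same]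
  -- key lower bound on the tail lintegral
  have key : ENNReal.ofReal (3*x/4) * ℙ A ≤ ∫⁻ t in Set.Ioi (x/4), gA t := by
    have hxsplit : ENNReal.ofReal x = ENNReal.ofReal (x/4) + ENNReal.ofReal (3*x/4) := by
      rw [← ENNReal.ofReal_add (by linarith) (by linarith)]
      congr 1
      ring
    have h1 : ENNReal.ofReal x * ℙ A ≤ ∫⁻ t in Set.Ioi (0:ℝ), gA t := by
      rw [← step2]
      calc ENNReal.ofReal x * ℙ A = ENNReal.ofReal (x * (ℙ A).toReal) := by
            rw [ENNReal.ofReal_mul hx.le, ENNReal.ofReal_toReal (measure_ne_top _ _)]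
        _ ≤ ENNReal.ofReal (∫ ω in A, Y ω) := ENNReal.ofReal_le_ofReal step1
    rw [hsum] at h1
    have h2 : ENNReal.ofReal (x/4) * ℙ A + ENNReal.ofReal (3*x/4) * ℙ A
        ≤ ENNReal.ofReal (x/4) * ℙ A + ∫⁻ t in Set.Ioi (x/4), gA t := by
      calc ENNReal.ofReal (x/4) * ℙ A + ENNReal.ofReal (3*x/4) * ℙ A
          = ENNReal.ofReal x * ℙ A := by rw [hxsplit, add_mul]
        _ ≤ (∫⁻ t in Set.Ioc (0:ℝ) (x/4), gA t) + ∫⁻ t in Set.Ioi (x/4), gA t := h1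
        _ ≤ ENNReal.ofReal (x/4) * ℙ A + ∫⁻ t in Set.Ioi (x/4), gA t :=
            add_le_add hIoc le_rfl
    exact (ENNReal.add_le_add_iff_left
      (ENNReal.mul_ne_top ENNReal.ofReal_ne_top (measure_ne_top _ _))).1 h2
  -- change of variables and comparison with unrestricted tails
  set I : ℝ≥0∞ := ∫⁻ v in Set.Ioi (1/4 : ℝ), g (x * v) with hIdef
  have hscaleA : ∫⁻ t in Set.Ioi (x/4), gA t
      = ENNReal.ofReal x * ∫⁻ v in Set.Ioi (1/4 : ℝ), gA (x * v) := by
    have h := lint_scale_aux hx gA hgAmble (1/4)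
    rw [show x * (1/4 : ℝ) = x/4 by ring] at h
    exact h
  have hIA_le : (∫⁻ v in Set.Ioi (1/4 : ℝ), gA (x * v)) ≤ I :=
    lintegral_mono fun v => hgA_le_g _
  have key2 : ENNReal.ofReal (3*x/4) * ℙ A ≤ ENNReal.ofReal x * I := by
    calc ENNReal.ofReal (3*x/4) * ℙ A ≤ ∫⁻ t in Set.Ioi (x/4), gA t := key
      _ = ENNReal.ofReal x * ∫⁻ v in Set.Ioi (1/4 : ℝ), gA (x * v) := hscaleA
      _ ≤ ENNReal.ofReal x * I := mul_le_mul' le_rfl hIA_le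
  -- finiteness of I
  have hIfin : I ≠ ⊤ := by
    have hscale : ∫⁻ t in Set.Ioi (x/4), g t = ENNReal.ofReal x * I := by
      have h := lint_scale_aux hx g hgmble (1/4)
      rw [show x * (1/4 : ℝ) = x/4 by ring] at h
      exact h
    have hfull : ∫⁻ t in Set.Ioi (0:ℝ), g t = ∫⁻ ω, ENNReal.ofReal (Y ω) ∂ℙ :=
      (lintegral_eq_lintegral_meas_lt ℙ (Filter.Eventually.of_forall hYpos)
        hYint.aemeasurable).symm
    have hYfin : ∫⁻ ω, ENNReal.ofReal (Y ω) ∂ℙ < ⊤ := by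
      have h2 := hYint.2
      rw [hasFiniteIntegral_iff_norm] at h2
      calc ∫⁻ ω, ENNReal.ofReal (Y ω) ∂ℙ ≤ ∫⁻ ω, ENNReal.ofReal ‖Y ω‖ ∂ℙ :=
            lintegral_mono fun ω => ENNReal.ofReal_le_ofReal (le_abs_self _)
        _ < ⊤ := h2
    have hmono : ∫⁻ t in Set.Ioi (x/4), g t ≤ ∫⁻ t in Set.Ioi (0:ℝ), g t :=
      lintegral_mono_set (Set.Ioi_subset_Ioi (by linarith))
    have hfin : ENNReal.ofReal x * I < ⊤ := by
      rw [← hscale]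
      exact lt_of_le_of_lt hmono (hfull ▸ hYfin)
    intro hI
    rw [hI, ENNReal.mul_top (by simp [ENNReal.ofReal_eq_zero, not_le, hx])] at hfin
    exact (lt_irrefl _ hfin)
  -- convert the RHS integral
  have hrhs : ∫ v in Set.Ioi (1/4 : ℝ), (ℙ {ω | x * v < Y ω}).toReal = I.toReal := by
    apply integral_toReal
    · exact (hgmble.comp (measurable_const_mul x)).aemeasurable
    · exact Filter.Eventually.of_forall fun v => measure_lt_top _ _
  rw [hrhs]
  -- conclude
  have hkey2r : (ENNReal.ofReal (3*x/4) * ℙ A).toReal ≤ (ENNReal.ofReal x * I).toReal :=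
    ENNReal.toReal_mono (ENNReal.mul_ne_top ENNReal.ofReal_ne_top hIfin) key2
  rw [ENNReal.toReal_mul, ENNReal.toReal_mul, ENNReal.toReal_ofReal (by linarith),
    ENNReal.toReal_ofReal hx.le] at hkey2r
  have hPA : (0:ℝ) ≤ (ℙ A).toReal := ENNReal.toReal_nonneg
  have hI0 : (0:ℝ) ≤ I.toReal := ENNReal.toReal_nonneg
  nlinarith [hkey2r, hx, hI0, hPA]

theorem stmt_1 {Ω : Type*} [MeasureSpace Ω] [IsProbabilityMeasure (ℙ : Measure Ω)]
    (Y : Ω → ℝ) (hYpos : ∀ ω, 0 ≤ Y ω) (hYint : Integrable Y)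
    (G : MeasurableSpace Ω) (hG : G ≤ ‹MeasureSpace Ω›.toMeasurableSpace) :
    ∀ x : ℝ, 0 < x →
      (ℙ {ω | x < (ℙ[Y|G]) ω}).toReal ≤
        4 * ∫ v in Set.Ioi (1/4 : ℝ), (ℙ {ω | x * v < Y ω}).toReal := by
  intro x hx
  set A : Set Ω := {ω | x < (ℙ[Y|G]) ω} with hAdef
  have hAmG : MeasurableSet[G] A :=
    measurableSet_lt measurable_const stronglyMeasurable_condExp.measurable
  have hA : MeasurableSet[‹MeasureSpace Ω›.toMeasurableSpace] A := hG _ hAmG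
  have heq : ∫ ω in A, (ℙ[Y|G]) ω = ∫ ω in A, Y ω := setIntegral_condExp hG hYint hAmG
  have step1 : x * (ℙ A).toReal ≤ ∫ ω in A, Y ω :=
    markov_set_aux (ℙ[Y|G]) Y integrable_condExp A hA x (fun ω hω => le_of_lt hω) heq
  exact tail_bound_aux Y hYpos hYint A hA x hx step1
end

section
/- Let Y and Z be nonnegative random variables such that Z ≤ E[Y | Z] almost surely. Then for all x > 0, P(Z > x) ≤ ∫_1^∞ P(Y > x·v/4) dv. -/
open MeasureTheory ProbabilityTheory
open scoped ProbabilityTheory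

theorem stmt_2 {Ω : Type*} [MeasureSpace Ω] [IsProbabilityMeasure (ℙ : Measure Ω)]
    (Y Z : Ω → ℝ) (hYpos : ∀ ω, 0 ≤ Y ω) (hZpos : ∀ ω, 0 ≤ Z ω)
    (hYint : Integrable Y) (hZmeas : Measurable Z)
    (hdom : ∀ᵐ ω ∂ℙ, Z ω ≤ (ℙ[Y | MeasurableSpace.comap Z inferInstance]) ω) :
    ∀ x : ℝ, 0 < x →
      (ℙ {ω | x < Z ω}).toReal ≤
        ∫ v in Set.Ioi (1 : ℝ), (ℙ {ω | x * v / 4 < Y ω}).toReal := by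
  intro x hx
  set μ : Measure Ω := ℙ with hμ
  have hm : MeasurableSpace.comap Z inferInstance ≤ (inferInstance : MeasurableSpace Ω) :=
    hZmeas.comap_le
  set A : Set Ω := {ω | x < Z ω} with hA
  have hAmeas : MeasurableSet A := measurableSet_lt measurable_const hZmeas
  have hAm : MeasurableSet[MeasurableSpace.comap Z inferInstance] A :=
    ⟨Set.Ioi x, measurableSet_Ioi, rfl⟩
  have hCE : Integrable (μ[Y | MeasurableSpace.comap Z inferInstance]) μ := integrable_condExp
  have hZint : Integrable Z μ := by
    refine hCE.mono hZmeas.aestronglyMeasurable ?_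
    filter_upwards [hdom] with ω h
    rw [Real.norm_eq_abs, abs_of_nonneg (hZpos ω)]
    exact h.trans (le_abs_self _)
  set f : ℝ → ℝ := fun u => (μ {a | u < Y a}).toReal with hf
  set g : Ω → ℝ := fun ω => max (Y ω - x / 4) 0 with hg
  have hgint : Integrable g μ := (hYint.sub (integrable_const _)).pos_part
  have hgnn : 0 ≤ᵐ[μ] g := Filter.Eventually.of_forall fun ω => le_max_right _ _
  -- layer cake for g
  have hlayer : ∫ ω, g ω ∂μ = ∫ t in Set.Ioi (0 : ℝ), (μ {a | t < g a}).toReal :=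
    hgint.integral_eq_integral_meas_lt hgnn
  have hsets : ∀ t ∈ Set.Ioi (0 : ℝ), (μ {a | t < g a}).toReal = f (x / 4 + t) := by
    intro t ht
    rw [Set.mem_Ioi] at ht
    congr 2
    ext a
    simp only [hg, hf, Set.mem_setOf_eq, lt_max_iff, lt_sub_iff_add_lt']
    exact or_iff_left (asymm ht)
  have htrans : ∫ t in Set.Ioi (0 : ℝ), f (x / 4 + t) = ∫ u in Set.Ioi (x / 4), f u := by
    have := (measurePreserving_add_left (volume : Measure ℝ) (x / 4)).setIntegral_preimage_emb
      (measurableEmbedding_addLeft (x / 4)) f (Set.Ioi (x / 4))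
    rw [← this]
    congr 1
    ext t
    simp
  have hT : ∫ ω, g ω ∂μ = ∫ u in Set.Ioi (x / 4), f u := by
    rw [hlayer, setIntegral_congr_fun measurableSet_Ioi hsets, htrans]
  set T : ℝ := ∫ u in Set.Ioi (x / 4), f u with hTdef
  have hTnn : 0 ≤ T := by
    rw [← hT]
    exact integral_nonneg fun ω => le_max_right _ _
  -- Markov chain
  have pAnn : 0 ≤ (μ A).toReal := ENNReal.toReal_nonneg
  have step1 : x * (μ A).toReal ≤ ∫ ω in A, Z ω ∂μ := by
    have h := setIntegral_mono_on ((integrableOn_const (measure_ne_top _ _)))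
      hZint.integrableOn hAmeas (fun ω hω => le_of_lt hω)
    rwa [setIntegral_const, smul_eq_mul, mul_comm] at h
  have step2 : ∫ ω in A, Z ω ∂μ ≤ ∫ ω in A, (μ[Y | MeasurableSpace.comap Z inferInstance]) ω ∂μ :=
    setIntegral_mono_ae hZint.integrableOn hCE.integrableOn hdom
  have step3 : ∫ ω in A, (μ[Y | MeasurableSpace.comap Z inferInstance]) ω ∂μ = ∫ ω in A, Y ω ∂μ :=
    setIntegral_condExp hm hYint hAm
  have step4 : ∫ ω in A, Y ω ∂μ ≤ x / 2 * (μ A).toReal + 2 * T := by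
    have hpt : ∀ ω, Y ω ≤ x / 2 + 2 * g ω := by
      intro ω
      rcases le_or_gt (Y ω) (x / 2) with h | h
      · have : 0 ≤ g ω := le_max_right _ _
        linarith
      · have : Y ω - x / 4 ≤ g ω := le_max_left _ _
        nlinarith
    calc ∫ ω in A, Y ω ∂μ ≤ ∫ ω in A, (x / 2 + 2 * g ω) ∂μ := by
          refine setIntegral_mono_on hYint.integrableOn ?_ hAmeas fun ω _ => hpt ω
          exact ((integrable_const _).add (hgint.const_mul 2)).integrableOn
      _ = x / 2 * (μ A).toReal + 2 * ∫ ω in A, g ω ∂μ := by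
          rw [integral_add (show Integrable (fun _ : Ω => x / 2) (μ.restrict A) from integrableOn_const (measure_ne_top _ _))
            ((hgint.const_mul 2).integrableOn), setIntegral_const, smul_eq_mul, mul_comm,
            integral_const_mul, Measure.real]
      _ ≤ x / 2 * (μ A).toReal + 2 * T := by
          have : ∫ ω in A, g ω ∂μ ≤ ∫ ω, g ω ∂μ := setIntegral_le_integral hgint hgnn
          rw [hT] at this
          linarith
  -- rewrite RHS
  have hRHS : ∫ v in Set.Ioi (1 : ℝ), (μ {ω | x * v / 4 < Y ω}).toReal = (x / 4)⁻¹ * T := by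
    have key := integral_comp_mul_left_Ioi f 1 (b := x / 4) (by linarith)
    have : ∀ v : ℝ, f (x / 4 * v) = (μ {ω | x * v / 4 < Y ω}).toReal := by
      intro v
      simp only [hf]
      congr 2
      ext ω
      constructor <;> intro h <;> [skip; skip] <;> simp only [Set.mem_setOf_eq] at * <;> linarith
    simp only [this] at key
    rw [key, mul_one, smul_eq_mul]
  rw [hRHS]
  have hxT : x * (μ A).toReal ≤ x / 2 * (μ A).toReal + 2 * T :=
    le_trans step1 (le_trans step2 (by rw [step3]; exact step4))
  rw [inv_div, div_mul_eq_mul_div, le_div_iff₀ hx]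
  nlinarith [hxT, hTnn, pAnn, hx]
end

section
/- Let D_1, ..., D_n be a square-integrable martingale difference sequence with respect to (F_i)_{i=0}^n. Then for all x, v > 0, P( max_{1≤k≤n} |∑_{i=1}^k D_i| > x ) ≤ 2·exp(-x²/(2v²)) + P( ∑_{i=1}^n (D_i² + E[D_i² | F_{i-1}]) > v² ). -/
open MeasureTheory ProbabilityTheory
open scoped ProbabilityTheory


private lemma key_ineq6 (u : ℝ) : Real.exp (u - u^2/2) ≤ 1 + u + u^2/2 := by
  have hpos : ∀ w : ℝ, 0 < 1 + w + w^2/2 := by intro w; nlinarith [sq_nonneg (w+1)]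
  set f : ℝ → ℝ := fun w => (1 + w + w^2/2) * Real.exp (w^2/2 - w) with hf
  have hderiv : ∀ w : ℝ, HasDerivAt f (w * (2 + w + w^2)/2 * Real.exp (w^2/2 - w)) w := by
    intro w
    have h1 : HasDerivAt (fun w : ℝ => 1 + w + w^2/2) (1 + w) w := by
      have := ((hasDerivAt_id w).const_add 1).add (((hasDerivAt_pow 2 w)).div_const 2)
      exact this.congr_deriv (by ring)
    have h2 : HasDerivAt (fun w : ℝ => w^2/2 - w) (w - 1) w := by
      have := (((hasDerivAt_pow 2 w)).div_const 2).sub (hasDerivAt_id w)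
      exact this.congr_deriv (by push_cast; ring)
    have h3 := (h2.exp)
    have := h1.mul h3
    exact this.congr_deriv (by ring)
  have hf1 : ∀ w : ℝ, 1 ≤ f w := by
    intro w
    have hcont : Continuous f := by
      apply Continuous.mul
      · continuity
      · exact (Real.continuous_exp.comp (by continuity))
    have hf0 : f 0 = 1 := by simp [hf]
    rcases le_or_gt 0 w with hw | hw
    · have hmono : MonotoneOn f (Set.Ici (0:ℝ)) := by
        apply monotoneOn_of_deriv_nonneg (convex_Ici 0) hcont.continuousOn
        · intro z hz
          exact (hderiv z).differentiableAt.differentiableWithinAt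
        · intro z hz
          rw [(hderiv z).deriv]
          have hz0 : 0 ≤ z := by simpa using le_of_lt (by simpa using hz)
          have : (0:ℝ) ≤ 2 + z + z^2 := by nlinarith [sq_nonneg z]
          positivity
      calc 1 = f 0 := hf0.symm
        _ ≤ f w := hmono (by simp) (by simpa using hw) hw
    · have hanti : AntitoneOn f (Set.Iic (0:ℝ)) := by
        apply antitoneOn_of_deriv_nonpos (convex_Iic 0) hcont.continuousOn
        · intro z hz
          exact (hderiv z).differentiableAt.differentiableWithinAt
        · intro z hz
          rw [(hderiv z).deriv]
          have hz0 : z ≤ 0 := by simpa using le_of_lt (by simpa using hz)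
          have h1 : (0:ℝ) < 2 + z + z^2 := by nlinarith [sq_nonneg (z+1)]
          have h2 : z * (2 + z + z^2)/2 ≤ 0 := by nlinarith
          exact mul_nonpos_of_nonpos_of_nonneg h2 (Real.exp_pos _).le
      calc 1 = f 0 := hf0.symm
        _ ≤ f w := hanti (by simpa using hw.le) (by simp) hw.le
  have h := hf1 u
  have hE : 0 < Real.exp (u^2/2 - u) := Real.exp_pos _
  rw [hf] at h
  have : Real.exp (u - u^2/2) * 1 ≤ Real.exp (u - u^2/2) * ((1 + u + u^2/2) * Real.exp (u^2/2 - u)) :=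
    mul_le_mul_of_nonneg_left h (Real.exp_pos _).le
  calc Real.exp (u - u^2/2) = Real.exp (u - u^2/2) * 1 := by ring
    _ ≤ Real.exp (u - u^2/2) * ((1 + u + u^2/2) * Real.exp (u^2/2 - u)) := this
    _ = (1 + u + u^2/2) * (Real.exp (u - u^2/2) * Real.exp (u^2/2 - u)) := by ring
    _ = 1 + u + u^2/2 := by rw [← Real.exp_add]; norm_num

private lemma half_ineq6 (u : ℝ) : u - u^2/2 ≤ 1/2 := by nlinarith [sq_nonneg (u-1)]

private lemma exp_decay6 (a : ℝ) (ha : 0 ≤ a) : Real.exp (-a) * (1 + a) ≤ 1 := by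
  have h := Real.add_one_le_exp a
  have := Real.exp_pos (-a)
  have hE : Real.exp (-a) * Real.exp a = 1 := by rw [← Real.exp_add]; simp
  nlinarith


private lemma maximal_aux6 {Ω : Type*} [MeasureSpace Ω] [IsProbabilityMeasure (ℙ : Measure Ω)]
    (n : ℕ) (ℱ : ℕ → MeasurableSpace Ω) (hℱmono : Monotone ℱ)
    (hℱle : ∀ i, ℱ i ≤ ‹MeasureSpace Ω›.toMeasurableSpace)
    (M : ℕ → Ω → ℝ)
    (hmeas : ∀ k, k ≤ n → Measurable[ℱ k] (M k))
    (hint : ∀ k, k ≤ n → Integrable (M k) ℙ)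
    (hnonneg : ∀ k, k ≤ n → 0 ≤ᵐ[ℙ] M k)
    (hM0 : ∀ ω, M 0 ω = 1)
    (hsuper : ∀ k, k + 1 ≤ n → ℙ[M (k+1) | ℱ k] ≤ᵐ[ℙ] M k)
    (c : ℝ) (hc : 1 < c) :
    (ℙ {ω | ∃ k ≤ n, c ≤ M k ω}).toReal ≤ 1 / c := by
  set G : ℕ → Set Ω := fun k => {ω | ∃ j ≤ k, c ≤ M j ω} with hG
  have hGm : ∀ k, k ≤ n → MeasurableSet[ℱ k] (G k) := by
    intro k hk
    have : G k = ⋃ j ∈ Finset.range (k+1), {ω | c ≤ M j ω} := by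
      ext ω; simp [hG, Nat.lt_succ_iff]
    rw [this]
    apply MeasurableSet.biUnion (Finset.range (k+1)).countable_toSet
    intro j hj
    simp only [Finset.coe_range, Set.mem_Iio, Nat.lt_succ_iff] at hj
    exact (hℱmono hj) _ (measurableSet_le measurable_const (hmeas j (hj.trans hk)))
  have hGM : ∀ k, k ≤ n → MeasurableSet (G k) := fun k hk => hℱle k _ (hGm k hk)
  have key : ∀ k, k ≤ n → (∫ ω in (G k)ᶜ, M k ω) + c * (ℙ (G k)).toReal ≤ 1 := by
    intro k
    induction k with
    | zero =>
      intro _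
      have hG0 : G 0 = ∅ := by
        ext ω; simp only [hG, Set.mem_setOf_eq, Set.mem_empty_iff_false, iff_false]
        rintro ⟨j, hj, hcj⟩
        interval_cases j
        rw [hM0 ω] at hcj; linarith
      rw [hG0]
      simp only [Set.compl_empty, measure_empty, ENNReal.toReal_zero, mul_zero, add_zero,
        Measure.restrict_univ]
      have : (fun ω => M 0 ω) = fun _ : Ω => (1:ℝ) := funext hM0
      rw [this]
      simp
    | succ k ih =>
      intro hk1
      have hk : k ≤ n := by omega
      have IH := ih hk
      set A : Set Ω := (G k)ᶜ ∩ {ω | c ≤ M (k+1) ω} with hA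
      have hAM : MeasurableSet A :=
        (hGM k hk).compl.inter
          (measurableSet_le measurable_const ((hmeas (k+1) hk1).mono (hℱle (k+1)) le_rfl))
      have hGsucc : G (k+1) = G k ∪ A := by
        ext ω
        simp only [hG, hA, Set.mem_union, Set.mem_inter_iff, Set.mem_compl_iff,
          Set.mem_setOf_eq]
        constructor
        · rintro ⟨j, hj, hcj⟩
          rcases Nat.lt_succ_iff_lt_or_eq.mp (Nat.lt_succ_of_le hj) with h | h
          · exact Or.inl ⟨j, by omega, hcj⟩
          · by_cases hGk : ∃ j ≤ k, c ≤ M j ω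
            · exact Or.inl hGk
            · exact Or.inr ⟨hGk, h ▸ hcj⟩
        · rintro (⟨j, hj, hcj⟩ | ⟨_, hc1⟩)
          · exact ⟨j, by omega, hcj⟩
          · exact ⟨k+1, le_rfl, hc1⟩
      have hdisj : Disjoint (G k) A := by
        rw [hA]; exact Set.disjoint_left.mpr fun ω hω ⟨hω', _⟩ => hω' hω
      have hcompl : (G (k+1))ᶜ = (G k)ᶜ ∩ {ω | M (k+1) ω < c} := by
        rw [hGsucc, Set.compl_union, hA, Set.compl_inter]
        ext ω
        simp only [Set.mem_inter_iff, Set.mem_union, Set.mem_compl_iff, Set.mem_setOf_eq,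
          not_le, compl_compl]
        tauto
      have hdisj2 : Disjoint ((G (k+1))ᶜ) A := by
        rw [hcompl, hA]
        apply Set.disjoint_left.mpr
        rintro ω ⟨_, h1⟩ ⟨_, h2⟩
        simp only [Set.mem_setOf_eq] at h1 h2
        linarith
      have hunion : (G (k+1))ᶜ ∪ A = (G k)ᶜ := by
        rw [hcompl, hA, ← Set.inter_union_distrib_left]
        have : {ω | M (k+1) ω < c} ∪ {ω | c ≤ M (k+1) ω} = Set.univ := by
          ext ω; simp [lt_or_ge (M (k+1) ω) c]
        rw [this, Set.inter_univ]
      have hintk1 := hint (k+1) hk1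
      have hMsucc : MeasurableSet ((G (k+1))ᶜ) := (hGM (k+1) hk1).compl
      -- step 1
      have step1 : c * (ℙ A).toReal ≤ ∫ ω in A, M (k+1) ω :=
        setIntegral_ge_of_const_le_real hAM (measure_ne_top _ _)
          (fun ω hω => hω.2) hintk1.integrableOn
      -- step 2 : union integral
      have step2 : (∫ ω in (G (k+1))ᶜ, M (k+1) ω) + ∫ ω in A, M (k+1) ω
          = ∫ ω in (G k)ᶜ, M (k+1) ω := by
        rw [← hunion]
        exact (setIntegral_union hdisj2 hAM hintk1.integrableOn hintk1.integrableOn).symm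
      -- step 3: condexp
      have step3 : ∫ ω in (G k)ᶜ, M (k+1) ω = ∫ ω in (G k)ᶜ, (ℙ[M (k+1) | ℱ k]) ω :=
        (setIntegral_condExp (hℱle k) hintk1 (hGm k hk).compl).symm
      have step4 : ∫ ω in (G k)ᶜ, (ℙ[M (k+1) | ℱ k]) ω ≤ ∫ ω in (G k)ᶜ, M k ω := by
        apply integral_mono_ae (integrable_condExp.integrableOn)
          ((hint k hk).integrableOn)
        exact ae_restrict_of_ae (hsuper k hk1)
      have hmeasadd : (ℙ (G (k+1))).toReal = (ℙ (G k)).toReal + (ℙ A).toReal := by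
        rw [hGsucc, measure_union hdisj hAM, ENNReal.toReal_add (measure_ne_top _ _) (measure_ne_top _ _)]
      calc (∫ ω in (G (k+1))ᶜ, M (k+1) ω) + c * (ℙ (G (k+1))).toReal
          = (∫ ω in (G (k+1))ᶜ, M (k+1) ω) + c * (ℙ A).toReal + c * (ℙ (G k)).toReal := by
            rw [hmeasadd]; ring
        _ ≤ (∫ ω in (G (k+1))ᶜ, M (k+1) ω) + (∫ ω in A, M (k+1) ω) + c * (ℙ (G k)).toReal := by
            linarith
        _ = (∫ ω in (G k)ᶜ, M (k+1) ω) + c * (ℙ (G k)).toReal := by rw [step2]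
        _ ≤ (∫ ω in (G k)ᶜ, M k ω) + c * (ℙ (G k)).toReal := by
            rw [step3]; linarith
        _ ≤ 1 := IH
  have hfinal := key n le_rfl
  have hnn : 0 ≤ ∫ ω in (G n)ᶜ, M n ω :=
    integral_nonneg_of_ae ((hnonneg n le_rfl).filter_mono (ae_mono Measure.restrict_le_self))
  have hcpos : 0 < c := lt_trans one_pos hc
  have : c * (ℙ (G n)).toReal ≤ 1 := by linarith
  show (ℙ (G n)).toReal ≤ 1 / c
  rw [le_div_iff₀ hcpos]
  linarith

private lemma one_side {Ω : Type*} [MeasureSpace Ω] [IsProbabilityMeasure (ℙ : Measure Ω)]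
    (n : ℕ) (ℱ : ℕ → MeasurableSpace Ω) (hℱmono : Monotone ℱ)
    (hℱle : ∀ i, ℱ i ≤ ‹MeasureSpace Ω›.toMeasurableSpace)
    (D : ℕ → Ω → ℝ)
    (hadapt : ∀ i, 1 ≤ i → i ≤ n → Measurable[ℱ i] (D i))
    (hL2 : ∀ i, 1 ≤ i → i ≤ n → MemLp (D i) 2 ℙ)
    (hmds : ∀ i, 1 ≤ i → i ≤ n → ℙ[D i | ℱ (i - 1)] =ᵐ[ℙ] 0)
    (x v : ℝ) (hx : 0 < x) (hv : 0 < v) :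
    ℙ ({ω | ∃ k ∈ Finset.Icc 1 n, x < ∑ i ∈ Finset.Icc 1 k, D i ω} ∩
       {ω | ∑ i ∈ Finset.Icc 1 n, ((D i ω) ^ 2 + (ℙ[fun ω' => (D i ω') ^ 2 | ℱ (i - 1)]) ω) ≤ v ^ 2})
      ≤ ENNReal.ofReal (Real.exp (-x ^ 2 / (2 * v ^ 2))) := by
  set L : ℝ := x / v ^ 2 with hLdef
  have hL : 0 < L := div_pos hx (by positivity)
  set C : ℕ → Ω → ℝ := fun i => ℙ[fun ω' => (D i ω') ^ 2 | ℱ (i - 1)] with hCdef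
  set ξ : ℕ → Ω → ℝ := fun i ω => L * D i ω - L^2/2 * ((D i ω)^2 + C i ω) with hxidef
  set M : ℕ → Ω → ℝ := fun k ω => Real.exp (∑ i ∈ Finset.Icc 1 k, ξ i ω) with hMdef
  -- basic measurability
  have hCsm : ∀ i, StronglyMeasurable[ℱ (i-1)] (C i) := fun i => stronglyMeasurable_condExp
  have hCnn : ∀ i : ℕ, 0 ≤ᵐ[ℙ] C i := fun i =>
    condExp_nonneg (Filter.Eventually.of_forall fun ω => sq_nonneg _)
  have hCae : ∀ᵐ ω ∂ℙ, ∀ i : ℕ, 0 ≤ C i ω := ae_all_iff.mpr hCnn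
  have hDm : ∀ i, 1 ≤ i → i ≤ n → Measurable (D i) :=
    fun i h1 h2 => (hadapt i h1 h2).mono (hℱle i) le_rfl
  have hxim : ∀ k i, 1 ≤ i → i ≤ k → k ≤ n → Measurable[ℱ k] (ξ i) := by
    intro k i h1 h2 h3
    have hD : Measurable[ℱ k] (D i) := (hadapt i h1 (h2.trans h3)).mono (hℱmono h2) le_rfl
    have hC : Measurable[ℱ k] (C i) :=
      ((hCsm i).measurable).mono (hℱmono (by omega : i - 1 ≤ k)) le_rfl
    fun_prop
  have hMmeas : ∀ k, k ≤ n → Measurable[ℱ k] (M k) := by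
    intro k hk
    apply Measurable.comp Real.measurable_exp
    apply Finset.measurable_sum
    intro i hi
    simp only [Finset.mem_Icc] at hi
    exact hxim k i hi.1 hi.2 hk
  have hMnonneg : ∀ k ω, 0 ≤ M k ω := fun k ω => (Real.exp_pos _).le
  have hxibound : ∀ᵐ ω ∂ℙ, ∀ i : ℕ, ξ i ω ≤ 1/2 := by
    filter_upwards [hCae] with ω hω i
    have h1 : L * D i ω - L^2/2 * (D i ω)^2 ≤ 1/2 := by
      have := half_ineq6 (L * D i ω)
      nlinarith [this]
    have h2 := hω i
    simp only [hxidef]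
    nlinarith
  have hMbound : ∀ k, ∀ᵐ ω ∂ℙ, M k ω ≤ Real.exp ((k : ℝ) / 2) := by
    intro k
    filter_upwards [hxibound] with ω hω
    simp only [hMdef]
    apply Real.exp_le_exp.mpr
    calc ∑ i ∈ Finset.Icc 1 k, ξ i ω ≤ ∑ _i ∈ Finset.Icc 1 k, (1:ℝ)/2 :=
          Finset.sum_le_sum fun i _ => hω i
      _ = (k : ℝ) / 2 := by
          rw [Finset.sum_const, Nat.card_Icc]; simp; ring
  have hMint : ∀ k, k ≤ n → Integrable (M k) ℙ := by
    intro k hk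
    apply Integrable.mono' (integrable_const (Real.exp ((k:ℝ)/2)))
    · exact ((hMmeas k hk).mono (hℱle k) le_rfl).aestronglyMeasurable
    · filter_upwards [hMbound k] with ω hω
      rw [Real.norm_eq_abs, abs_of_nonneg (hMnonneg k ω)]; exact hω
  have hM0 : ∀ ω, M 0 ω = 1 := by intro ω; simp [hMdef]
  -- supermartingale property
  have hsuper : ∀ k, k + 1 ≤ n → ℙ[M (k+1) | ℱ k] ≤ᵐ[ℙ] M k := by
    intro k hk1
    have h1k : 1 ≤ k + 1 := by omega
    set F : Ω → ℝ := fun ω => M k ω * Real.exp (-(L^2/2 * C (k+1) ω)) with hFdef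
    set g : Ω → ℝ := fun ω => Real.exp (L * D (k+1) ω - (L * D (k+1) ω)^2/2) with hgdef
    have hdecomp : M (k+1) = F * g := by
      funext ω
      simp only [hMdef, hFdef, hgdef, Pi.mul_apply]
      rw [Finset.sum_Icc_succ_top (by omega : 1 ≤ k + 1), Real.exp_add, mul_assoc,
        ← Real.exp_add (-(L^2/2 * C (k+1) ω)) (L * D (k+1) ω - (L * D (k+1) ω)^2/2)]
      congr 1
      simp only [hxidef]
      ring
    have hCkm : Measurable[ℱ k] (C (k+1)) := (hCsm (k+1)).measurable
    have hMkm : Measurable[ℱ k] (M k) := hMmeas k (by omega)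
    have hFm : Measurable[ℱ k] F := by
      apply Measurable.mul hMkm
      exact Real.measurable_exp.comp (((measurable_const.mul hCkm)).neg)
    have hFsm : StronglyMeasurable[ℱ k] F := hFm.stronglyMeasurable
    have hDk1 : Measurable (D (k+1)) := hDm (k+1) h1k hk1
    have hgbound : ∀ ω, g ω ≤ Real.exp (1/2) := by
      intro ω
      simp only [hgdef]
      exact Real.exp_le_exp.mpr (half_ineq6 _)
    have hgm : Measurable g := by
      apply Real.measurable_exp.comp
      fun_prop
    have hgint : Integrable g ℙ := by
      apply Integrable.mono' (integrable_const (Real.exp (1/2)))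
      · exact hgm.aestronglyMeasurable
      · refine Filter.Eventually.of_forall fun ω => ?_
        rw [Real.norm_eq_abs, abs_of_nonneg (Real.exp_pos _).le]
        exact hgbound ω
    have hFgint : Integrable (F * g) ℙ := by rw [← hdecomp]; exact hMint (k+1) hk1
    have hpull : ℙ[F * g | ℱ k] =ᵐ[ℙ] F * ℙ[g | ℱ k] :=
      condExp_mul_of_stronglyMeasurable_left hFsm hFgint hgint
    -- bound the conditional expectation of g
    set h : Ω → ℝ := fun ω => 1 + L * D (k+1) ω + L^2/2 * (D (k+1) ω)^2 with hhdef
    have hDint : Integrable (D (k+1)) ℙ := (hL2 (k+1) h1k hk1).integrable one_le_two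
    have hD2int : Integrable (fun ω => (D (k+1) ω)^2) ℙ := (hL2 (k+1) h1k hk1).integrable_sq
    have hhint : Integrable h ℙ := by
      simp only [hhdef]
      exact ((integrable_const (1:ℝ)).add (hDint.const_mul L)).add (hD2int.const_mul (L^2/2))
    have hgh : g ≤ h := by
      intro ω
      simp only [hgdef, hhdef]
      have := key_ineq6 (L * D (k+1) ω)
      nlinarith [this]
    have hcond_gh : ℙ[g | ℱ k] ≤ᵐ[ℙ] ℙ[h | ℱ k] :=
      condExp_mono hgint hhint (Filter.Eventually.of_forall hgh)
    -- compute ℙ[h | ℱ k]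
    have hcondh : ℙ[h | ℱ k] =ᵐ[ℙ] fun ω => 1 + L^2/2 * C (k+1) ω := by
      have e1 : h = (fun _ => (1:ℝ)) + (L • D (k+1)) + ((L^2/2) • fun ω => (D (k+1) ω)^2) := by
        funext ω; simp [hhdef]
      rw [e1]
      have h2 : Integrable ((L • D (k+1)) : Ω → ℝ) ℙ := hDint.smul L
      have h3 : Integrable (((L^2/2) • fun ω => (D (k+1) ω)^2) : Ω → ℝ) ℙ := hD2int.smul _
      refine (condExp_add ((integrable_const (1:ℝ)).add h2) h3 _).trans ?_
      have ha := condExp_add (integrable_const (1:ℝ)) h2 (m := ℱ k)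
      have hb : ℙ[(fun _ => (1:ℝ)) | ℱ k] = fun _ => (1:ℝ) := condExp_const (hℱle k) 1
      have hc1 : ℙ[(L • D (k+1) : Ω → ℝ) | ℱ k] =ᵐ[ℙ] L • ℙ[D (k+1) | ℱ k] :=
        condExp_smul L (D (k+1)) _
      have hmds' : ℙ[D (k+1) | ℱ k] =ᵐ[ℙ] 0 := hmds (k+1) h1k hk1
      have hc2 : ℙ[((L^2/2) • fun ω => (D (k+1) ω)^2 : Ω → ℝ) | ℱ k]
          =ᵐ[ℙ] (L^2/2) • ℙ[(fun ω => (D (k+1) ω)^2) | ℱ k] := condExp_smul _ _ _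
      have hCk1 : ℙ[(fun ω => (D (k+1) ω)^2) | ℱ k] = C (k+1) := rfl
      filter_upwards [ha, hc1, hc2, hmds'] with ω hha hhc1 hhc2 hhm
      simp only [Pi.add_apply] at hha ⊢
      rw [hha, hb]
      simp only [Pi.smul_apply, smul_eq_mul] at hhc1 hhc2
      rw [hhc1, hhc2, hCk1]
      simp only [Pi.zero_apply] at hhm
      rw [hhm]
      simp
    -- combine
    rw [hdecomp]
    filter_upwards [hpull, hcond_gh, hcondh, hCnn (k+1)] with ω h1 h2 h3 h4
    rw [h1]
    simp only [Pi.mul_apply]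
    have hF0 : 0 ≤ F ω := mul_nonneg (hMnonneg k ω) (Real.exp_pos _).le
    have step : F ω * (ℙ[g | ℱ k]) ω ≤ F ω * (1 + L^2/2 * C (k+1) ω) := by
      apply mul_le_mul_of_nonneg_left _ hF0
      calc (ℙ[g | ℱ k]) ω ≤ (ℙ[h | ℱ k]) ω := h2
        _ = 1 + L^2/2 * C (k+1) ω := h3
    refine step.trans ?_
    have ha : 0 ≤ L^2/2 * C (k+1) ω := mul_nonneg (by positivity) h4
    have := exp_decay6 (L^2/2 * C (k+1) ω) ha
    simp only [hFdef]
    calc M k ω * Real.exp (-(L^2/2 * C (k+1) ω)) * (1 + L^2/2 * C (k+1) ω)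
        = M k ω * (Real.exp (-(L^2/2 * C (k+1) ω)) * (1 + L^2/2 * C (k+1) ω)) := by ring
      _ ≤ M k ω * 1 := mul_le_mul_of_nonneg_left this (hMnonneg k ω)
      _ = M k ω := by ring
  -- now apply the maximal inequality
  set c : ℝ := Real.exp (x^2/(2*v^2)) with hcdef
  have hc : 1 < c := by
    rw [hcdef, show (1:ℝ) = Real.exp 0 from (Real.exp_zero).symm]
    exact Real.exp_lt_exp.mpr (by positivity)
  have hmax := maximal_aux6 n ℱ hℱmono hℱle M hMmeas hMint
    (fun k _ => Filter.Eventually.of_forall (hMnonneg k)) hM0 hsuper c hc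
  -- a.e. inclusion of the event
  set T : Set Ω := {ω | ∃ k ∈ Finset.Icc 1 n, x < ∑ i ∈ Finset.Icc 1 k, D i ω} ∩
       {ω | ∑ i ∈ Finset.Icc 1 n, ((D i ω) ^ 2 + C i ω) ≤ v ^ 2} with hTdef
  set E : Set Ω := {ω | ∃ k ≤ n, c ≤ M k ω} with hEdef
  set N : Set Ω := {ω | ∀ i : ℕ, 0 ≤ C i ω} with hNdef
  have hsub : T ∩ N ⊆ E := by
    rintro ω ⟨⟨⟨k, hk, hSk⟩, hV⟩, hN⟩
    simp only [Finset.mem_Icc] at hk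
    simp only [hEdef, Set.mem_setOf_eq]
    refine ⟨k, hk.2, ?_⟩
    simp only [hMdef, hcdef]
    apply Real.exp_le_exp.mpr
    have hsum : ∑ i ∈ Finset.Icc 1 k, ξ i ω
        = L * (∑ i ∈ Finset.Icc 1 k, D i ω)
          - L^2/2 * (∑ i ∈ Finset.Icc 1 k, ((D i ω)^2 + C i ω)) := by
      simp only [hxidef]
      rw [Finset.mul_sum, Finset.mul_sum, ← Finset.sum_sub_distrib]
    have hVk : ∑ i ∈ Finset.Icc 1 k, ((D i ω)^2 + C i ω)
        ≤ ∑ i ∈ Finset.Icc 1 n, ((D i ω)^2 + C i ω) := by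
      apply Finset.sum_le_sum_of_subset_of_nonneg
      · apply Finset.Icc_subset_Icc_right hk.2
      · intro i _ _
        have := hN i
        positivity
    have hVk' : ∑ i ∈ Finset.Icc 1 k, ((D i ω)^2 + C i ω) ≤ v^2 := hVk.trans hV
    have hLx : L * x ≤ L * (∑ i ∈ Finset.Icc 1 k, D i ω) :=
      mul_le_mul_of_nonneg_left hSk.le hL.le
    have hcomp : L * x - L^2/2 * v^2 = x^2/(2*v^2) := by
      rw [hLdef]; field_simp; ring
    rw [hsum]
    nlinarith [mul_le_mul_of_nonneg_left hVk' (by positivity : (0:ℝ) ≤ L^2/2)]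
  have hNae : ℙ Nᶜ = 0 := by
    have : Nᶜ = {ω | ¬ ∀ i : ℕ, 0 ≤ C i ω} := rfl
    rw [this, ← ae_iff]
    exact hCae
  have hTE : T ⊆ E ∪ Nᶜ := by
    intro ω hω
    by_cases hN : ω ∈ N
    · exact Or.inl (hsub ⟨hω, hN⟩)
    · exact Or.inr hN
  have h1 : ℙ T ≤ ℙ E := by
    calc ℙ T ≤ ℙ (E ∪ Nᶜ) := measure_mono hTE
      _ ≤ ℙ E + ℙ Nᶜ := measure_union_le _ _
      _ = ℙ E := by rw [hNae, add_zero]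
  have h2 : ℙ E ≤ ENNReal.ofReal (1/c) := by
    rw [← ENNReal.ofReal_toReal (measure_ne_top ℙ E)]
    exact ENNReal.ofReal_le_ofReal hmax
  have h3 : (1:ℝ)/c = Real.exp (-x ^ 2 / (2 * v ^ 2)) := by
    rw [hcdef, one_div, ← Real.exp_neg, neg_div]
  calc ℙ T ≤ ℙ E := h1
    _ ≤ ENNReal.ofReal (1/c) := h2
    _ = ENNReal.ofReal (Real.exp (-x ^ 2 / (2 * v ^ 2))) := by rw [h3]


theorem stmt_6 {Ω : Type*} [MeasureSpace Ω] [IsProbabilityMeasure (ℙ : Measure Ω)]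
    (n : ℕ) (hn : 1 ≤ n)
    (ℱ : ℕ → MeasurableSpace Ω) (hℱmono : Monotone ℱ)
    (hℱle : ∀ i, ℱ i ≤ ‹MeasureSpace Ω›.toMeasurableSpace)
    (D : ℕ → Ω → ℝ)
    (hadapt : ∀ i, 1 ≤ i → i ≤ n → Measurable[ℱ i] (D i))
    (hL2 : ∀ i, 1 ≤ i → i ≤ n → MemLp (D i) 2 ℙ)
    (hmds : ∀ i, 1 ≤ i → i ≤ n → ℙ[D i | ℱ (i - 1)] =ᵐ[ℙ] 0) :
    ∀ x v : ℝ, 0 < x → 0 < v →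
      (ℙ {ω | ∃ k ∈ Finset.Icc 1 n, x < |∑ i ∈ Finset.Icc 1 k, D i ω|}).toReal ≤
        2 * Real.exp (-x ^ 2 / (2 * v ^ 2)) +
          (ℙ {ω | v ^ 2 < ∑ i ∈ Finset.Icc 1 n,
              ((D i ω) ^ 2 + (ℙ[fun ω' => (D i ω') ^ 2 | ℱ (i - 1)]) ω)}).toReal := by
  intro x v hx hv
  set e : ℝ := Real.exp (-x ^ 2 / (2 * v ^ 2)) with hedef
  set W : Set Ω := {ω | v ^ 2 < ∑ i ∈ Finset.Icc 1 n,
      ((D i ω) ^ 2 + (ℙ[fun ω' => (D i ω') ^ 2 | ℱ (i - 1)]) ω)} with hWdef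
  set Wc : Set Ω := {ω | ∑ i ∈ Finset.Icc 1 n,
      ((D i ω) ^ 2 + (ℙ[fun ω' => (D i ω') ^ 2 | ℱ (i - 1)]) ω) ≤ v ^ 2} with hWcdef
  set Ap : Set Ω := {ω | ∃ k ∈ Finset.Icc 1 n, x < ∑ i ∈ Finset.Icc 1 k, D i ω} with hApdef
  set Am : Set Ω := {ω | ∃ k ∈ Finset.Icc 1 n, x < -∑ i ∈ Finset.Icc 1 k, D i ω} with hAmdef
  have hplus : ℙ (Ap ∩ Wc) ≤ ENNReal.ofReal e :=
    one_side n ℱ hℱmono hℱle D hadapt hL2 hmds x v hx hv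
  have hminus : ℙ (Am ∩ Wc) ≤ ENNReal.ofReal e := by
    have h := one_side n ℱ hℱmono hℱle (fun i ω => -D i ω)
      (fun i h1 h2 => (hadapt i h1 h2).neg)
      (fun i h1 h2 => (hL2 i h1 h2).neg)
      (fun i h1 h2 => by
        refine (condExp_neg (D i) _).trans ?_
        filter_upwards [hmds i h1 h2] with ω hω
        simp only [Pi.neg_apply, hω, Pi.zero_apply, neg_zero])
      x v hx hv
    simp only [neg_sq, Finset.sum_neg_distrib] at h
    exact h
  have hsplit : {ω | ∃ k ∈ Finset.Icc 1 n, x < |∑ i ∈ Finset.Icc 1 k, D i ω|}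
      ⊆ (Ap ∩ Wc) ∪ (Am ∩ Wc) ∪ W := by
    rintro ω ⟨k, hk, habs⟩
    by_cases hW : ω ∈ W
    · exact Or.inr hW
    · have hWc : ω ∈ Wc := by
        simp only [hWdef, Set.mem_setOf_eq, not_lt] at hW
        exact hW
      rcases lt_abs.mp habs with h | h
      · exact Or.inl (Or.inl ⟨⟨k, hk, h⟩, hWc⟩)
      · exact Or.inl (Or.inr ⟨⟨k, hk, h⟩, hWc⟩)
  have hmeasure : ℙ {ω | ∃ k ∈ Finset.Icc 1 n, x < |∑ i ∈ Finset.Icc 1 k, D i ω|}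
      ≤ ENNReal.ofReal e + ENNReal.ofReal e + ℙ W := by
    calc ℙ {ω | ∃ k ∈ Finset.Icc 1 n, x < |∑ i ∈ Finset.Icc 1 k, D i ω|}
        ≤ ℙ ((Ap ∩ Wc) ∪ (Am ∩ Wc) ∪ W) := measure_mono hsplit
      _ ≤ ℙ ((Ap ∩ Wc) ∪ (Am ∩ Wc)) + ℙ W := measure_union_le _ _
      _ ≤ (ℙ (Ap ∩ Wc) + ℙ (Am ∩ Wc)) + ℙ W := by
          gcongr
          exact measure_union_le _ _
      _ ≤ ENNReal.ofReal e + ENNReal.ofReal e + ℙ W := by gcongr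
  have hne : ENNReal.ofReal e + ENNReal.ofReal e + ℙ W ≠ ⊤ := by
    apply ENNReal.add_ne_top.mpr
    exact ⟨ENNReal.add_ne_top.mpr ⟨ENNReal.ofReal_ne_top, ENNReal.ofReal_ne_top⟩,
      measure_ne_top _ _⟩
  have := ENNReal.toReal_mono hne hmeasure
  refine this.trans ?_
  rw [ENNReal.toReal_add (by finiteness) (measure_ne_top _ _),
    ENNReal.toReal_add ENNReal.ofReal_ne_top ENNReal.ofReal_ne_top,
    ENNReal.toReal_ofReal (Real.exp_nonneg _)]
  linarith
end

section
/- Let γ > 0, q ≥ 0 and c ≥ 1. Then ∫_1^∞ exp( -(c·u^{1/2})^γ )·(1 + ln u)^q du ≤ K_{γ,q} · exp( -c^γ ) for a constant K_{γ,q} depending only on γ and q. -/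
open MeasureTheory Set Real

lemma aux_int (p s : ℝ) (hp : 0 < p) (hs : -1 < s) :
    IntegrableOn (fun x : ℝ => x ^ s * Real.exp (-x ^ p)) (Set.Ioi 0) := by
  have hs1 : (0:ℝ) < s + 1 := by linarith
  have ha : (0:ℝ) < (s + 1) / p := by positivity
  have hG : IntegrableOn (fun y : ℝ => Real.exp (-y) * y ^ ((s+1)/p - 1)) (Set.Ioi 0) :=
    Real.GammaIntegral_convergent ha
  have h := (integrableOn_Ioi_comp_rpow_iff'
      (fun y : ℝ => y ^ ((s+1)/p - 1) * Real.exp (-y)) (p := p) hp.ne').mpr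
      (by simpa [mul_comm] using hG)
  refine h.congr_fun (fun x hx => ?_) measurableSet_Ioi
  have hx0 : (0:ℝ) < x := hx
  beta_reduce
  rw [smul_eq_mul, ← Real.rpow_mul hx0.le, ← mul_assoc, ← Real.rpow_add hx0]
  congr 2
  field_simp
  ring

theorem stmt_18 (γ q : ℝ) (hγ : 0 < γ) (hq : 0 ≤ q) :
    ∃ K : ℝ, ∀ c : ℝ, 1 ≤ c →
      ∫ u in Set.Ioi (1 : ℝ),
          Real.exp (-(c * u ^ ((1:ℝ)/2)) ^ γ) * (1 + Real.log u) ^ q ≤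
        K * Real.exp (-c ^ γ) := by
  set g : ℝ → ℝ := fun u => Real.exp (1 - u ^ (γ/2)) * (1 + Real.log u) ^ q with hg_def
  -- integrability of the dominating function
  have hmaj : IntegrableOn (fun u : ℝ => Real.exp 1 * (u ^ q * Real.exp (-u ^ (γ/2))))
      (Set.Ioi 1) := by
    exact (((aux_int (γ/2) q (by positivity) (by linarith)).mono_set
      (Set.Ioi_subset_Ioi zero_le_one)).const_mul _)
  have hg_int : IntegrableOn g (Set.Ioi 1) := by
    refine Integrable.mono' hmaj ?_ ?_
    · -- a.e. strongly measurable
      refine ContinuousOn.aestronglyMeasurable ?_ measurableSet_Ioi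
      refine ContinuousOn.mul ?_ ?_
      · exact Real.continuous_exp.comp_continuousOn
          ((continuousOn_const.sub
            (fun x hx => ((Real.continuousAt_rpow_const x (γ/2)
              (Or.inl (lt_trans zero_lt_one hx).ne')).continuousWithinAt))))
      · exact (continuousOn_const.add
          (Real.continuousOn_log.mono (fun x hx => (lt_trans zero_lt_one hx).ne'))).rpow_const
          (fun x hx => Or.inr hq)
    · refine (ae_restrict_iff' measurableSet_Ioi).mpr (Filter.Eventually.of_forall fun u hu => ?_)
      have hu1 : (1:ℝ) < u := hu
      have hlog : 0 ≤ 1 + Real.log u := by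
        have := Real.log_nonneg hu1.le; linarith
      have hgn : 0 ≤ g u := by
        exact mul_nonneg (Real.exp_nonneg _) (Real.rpow_nonneg hlog q)
      rw [Real.norm_of_nonneg hgn]
      have h1 : (1 + Real.log u) ^ q ≤ u ^ q := by
        refine Real.rpow_le_rpow hlog ?_ hq
        have := Real.log_le_sub_one_of_pos (by linarith : (0:ℝ) < u)
        linarith
      have h2 : Real.exp (1 - u ^ (γ/2)) = Real.exp 1 * Real.exp (-u ^ (γ/2)) := by
        rw [← Real.exp_add]; ring_nf
      rw [hg_def]
      calc Real.exp (1 - u ^ (γ/2)) * (1 + Real.log u) ^ q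
          ≤ Real.exp (1 - u ^ (γ/2)) * u ^ q :=
            mul_le_mul_of_nonneg_left h1 (Real.exp_nonneg _)
        _ = Real.exp 1 * (u ^ q * Real.exp (-u ^ (γ/2))) := by rw [h2]; ring
  refine ⟨∫ u in Set.Ioi (1:ℝ), g u, fun c hc => ?_⟩
  have key : ∫ u in Set.Ioi (1 : ℝ),
      Real.exp (-(c * u ^ ((1:ℝ)/2)) ^ γ) * (1 + Real.log u) ^ q ≤
      ∫ u in Set.Ioi (1:ℝ), Real.exp (-c ^ γ) * g u := by
    refine integral_mono_of_nonneg ?_ (hg_int.const_mul _) ?_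
    · refine (ae_restrict_iff' measurableSet_Ioi).mpr (Filter.Eventually.of_forall fun u hu => ?_)
      have hu1 : (1:ℝ) < u := hu
      have hlog : 0 ≤ 1 + Real.log u := by
        have := Real.log_nonneg hu1.le; linarith
      exact mul_nonneg (Real.exp_nonneg _) (Real.rpow_nonneg hlog q)
    · refine (ae_restrict_iff' measurableSet_Ioi).mpr (Filter.Eventually.of_forall fun u hu => ?_)
      have hu1 : (1:ℝ) < u := hu
      have hu0 : (0:ℝ) < u := by linarith
      have hc0 : (0:ℝ) < c := by linarith
      have hlog : 0 ≤ 1 + Real.log u := by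
        have := Real.log_nonneg hu1.le; linarith
      have hcg : 1 ≤ c ^ γ := by
        calc (1:ℝ) = 1 ^ γ := (Real.one_rpow γ).symm
          _ ≤ c ^ γ := Real.rpow_le_rpow zero_le_one hc hγ.le
      have hug : 1 ≤ u ^ (γ/2) := by
        calc (1:ℝ) = 1 ^ (γ/2) := (Real.one_rpow _).symm
          _ ≤ u ^ (γ/2) := Real.rpow_le_rpow zero_le_one hu1.le (by positivity)
      have heq : (c * u ^ ((1:ℝ)/2)) ^ γ = c ^ γ * u ^ (γ/2) := by
        rw [Real.mul_rpow hc0.le (Real.rpow_nonneg hu0.le _), ← Real.rpow_mul hu0.le]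
        ring_nf
      have hexp : Real.exp (-(c * u ^ ((1:ℝ)/2)) ^ γ) ≤
          Real.exp (-c ^ γ) * Real.exp (1 - u ^ (γ/2)) := by
        rw [← Real.exp_add, heq]
        apply Real.exp_le_exp.mpr
        nlinarith [mul_nonneg (sub_nonneg.mpr hcg) (sub_nonneg.mpr hug)]
      calc Real.exp (-(c * u ^ ((1:ℝ)/2)) ^ γ) * (1 + Real.log u) ^ q
          ≤ (Real.exp (-c ^ γ) * Real.exp (1 - u ^ (γ/2))) * (1 + Real.log u) ^ q :=
            mul_le_mul_of_nonneg_right hexp (Real.rpow_nonneg hlog q)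
        _ = Real.exp (-c ^ γ) * g u := by rw [hg_def]; ring
  calc _ ≤ ∫ u in Set.Ioi (1:ℝ), Real.exp (-c ^ γ) * g u := key
    _ = Real.exp (-c ^ γ) * ∫ u in Set.Ioi (1:ℝ), g u := integral_const_mul _ _
    _ = (∫ u in Set.Ioi (1:ℝ), g u) * Real.exp (-c ^ γ) := mul_comm _ _
end
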